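/- Let m ≥ 2, let a₁,…,a_{m−1} be real numbers, and let p(s) = s^{m−1} + a_{m−1}s^{m−2} + ⋯ + a₂s + a₁. Suppose some complex root of p has nonnegative real part. Then there exist a continuous function f : ℝ → ℝ having a finite limit as t → ∞ and an (m−1)-times continuously differentiable function r : ℝ → ℝ satisfying r^{(m−1)}(t) + a_{m−1}r^{(m−2)}(t) + ⋯ + a₂ r′(t) + a₁ r(t) = f(t) for all t ≥ 0, such that the ℝ^{m−1}-valued function t ↦ (r(t), r′(t), …, r^{(m−2)}(t)) does not converge as t → ∞. -/

import Mathlib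

open Filter

set_option maxHeartbeats 1000000

lemma iterDeriv_re_exp (z : ℂ) (k : ℕ) :
    iteratedDeriv k (fun t : ℝ => (Complex.exp (z * t)).re)
      = fun t : ℝ => (z ^ k * Complex.exp (z * t)).re := by
  induction k with
  | zero => simp
  | succ k ih =>
    rw [iteratedDeriv_succ, ih]
    funext t
    have h1 : HasDerivAt (fun s : ℂ => Complex.exp (z * s))
        (Complex.exp (z * t) * (z * 1)) (t : ℂ) :=
      (Complex.hasDerivAt_exp (z * t)).comp (t : ℂ) ((hasDerivAt_id (t : ℂ)).const_mul z)
    have h : HasDerivAt (fun s : ℂ => z ^ k * Complex.exp (z * s))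
        (z ^ (k + 1) * Complex.exp (z * t)) (t : ℂ) := by
      have := h1.const_mul (z ^ k)
      refine this.congr_deriv ?_
      ring
    simpa using h.real_of_complex.deriv

lemma iterDeriv_id_one : iteratedDeriv 1 (fun t : ℝ => t) = fun _ => (1 : ℝ) := by
  funext t; rw [iteratedDeriv_one]; simp

lemma iterDeriv_id_two (k : ℕ) :
    iteratedDeriv (k + 2) (fun t : ℝ => t) = fun _ => 0 := by
  induction k with
  | zero => rw [iteratedDeriv_succ, iterDeriv_id_one]; funext t; simp
  | succ k ih => rw [iteratedDeriv_succ, ih]; funext t; simp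

/-- **Lemma 1 (necessity part).** If some complex root of
`s^(m-1) + a_{m-1} s^(m-2) + ⋯ + a₂ s + a₁` has nonnegative real part, then there exist a
continuous `f` with a finite limit at `∞` and an `(m-1)`-times continuously differentiable `r`
solving the ODE on `[0,∞)` such that `(r, r', …, r^{(m-2)})` does not converge as `t → ∞`. -/
theorem high_order_ode_nonconvergence
    (m : ℕ) (hm : 2 ≤ m) (a : ℕ → ℝ)
    (hroot : ∃ z : ℂ,
      z ^ (m - 1) + ∑ i ∈ Finset.range (m - 1), (a (i + 1) : ℂ) * z ^ i = 0 ∧ 0 ≤ z.re) :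
    ∃ (f : ℝ → ℝ) (fstar : ℝ) (r : ℝ → ℝ),
      Continuous f ∧ Tendsto f atTop (nhds fstar) ∧
      ContDiff ℝ (m - 1 : ℕ) r ∧
      (∀ t : ℝ, 0 ≤ t →
        iteratedDeriv (m - 1) r t
          + ∑ i ∈ Finset.range (m - 1), a (i + 1) * iteratedDeriv i r t = f t) ∧
      ¬ ∃ v : Fin (m - 1) → ℝ,
          Tendsto (fun t : ℝ => fun i : Fin (m - 1) => iteratedDeriv (i : ℕ) r t)
            atTop (nhds v) := by
  obtain ⟨z, hz1, hz2⟩ := hroot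
  have hm1 : 1 ≤ m - 1 := by omega
  by_cases hz0 : z = 0
  · -- z = 0 : take r t = t
    subst hz0
    have ha1 : a 1 = 0 := by
      have : (a 1 : ℂ) = 0 := by
        rw [zero_pow (by omega : m - 1 ≠ 0), zero_add] at hz1
        rw [Finset.sum_eq_single 0 (fun b _ hb => by
          simp [zero_pow hb]) (fun h => absurd (Finset.mem_range.2 (by omega)) h)] at hz1
        simpa using hz1
      exact_mod_cast this
    set r : ℝ → ℝ := fun t => t with hr
    have hconst : ∀ (j : ℕ), 1 ≤ j → ∀ t : ℝ, iteratedDeriv j r t = iteratedDeriv j r 0 := by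
      intro j hj t
      match j, hj with
      | 1, _ => rw [hr, iterDeriv_id_one]
      | (k+2), _ => rw [hr, iterDeriv_id_two]
    have hval : ∀ t : ℝ, iteratedDeriv (m - 1) r t
        + ∑ i ∈ Finset.range (m - 1), a (i + 1) * iteratedDeriv i r t
        = iteratedDeriv (m - 1) r 0
          + ∑ i ∈ Finset.range (m - 1), a (i + 1) * iteratedDeriv i r 0 := by
      intro t
      congr 1
      · exact hconst (m - 1) hm1 t
      · refine Finset.sum_congr rfl (fun i _ => ?_)
        rcases Nat.eq_zero_or_pos i with h | h
        · subst h; simp [ha1]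
        · rw [hconst i h t]
    refine ⟨fun _ => iteratedDeriv (m - 1) r 0
          + ∑ i ∈ Finset.range (m - 1), a (i + 1) * iteratedDeriv i r 0, _, r,
      continuous_const, tendsto_const_nhds, contDiff_id, fun t _ => hval t, ?_⟩
    rintro ⟨v, hv⟩
    have h0 : Tendsto r atTop (nhds (v ⟨0, by omega⟩)) := by
      have := ((continuous_apply (⟨0, by omega⟩ : Fin (m - 1))).tendsto v).comp hv
      simpa [Function.comp_def, iteratedDeriv_zero] using this
    exact not_tendsto_nhds_of_tendsto_atTop tendsto_id _ h0
  · -- z ≠ 0 : take r t = Re(exp(z t))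
    set r : ℝ → ℝ := fun t => (Complex.exp (z * t)).re with hr
    have hcd : ContDiff ℝ ((m - 1 : ℕ) : ℕ∞) r := by
      have hg : ContDiff ℝ ((m - 1 : ℕ) : ℕ∞) (fun t : ℝ => Complex.exp (z * t)) :=
        (contDiff_const.mul Complex.ofRealCLM.contDiff).cexp
      exact Complex.reCLM.contDiff.comp hg
    have hode : ∀ t : ℝ, iteratedDeriv (m - 1) r t
        + ∑ i ∈ Finset.range (m - 1), a (i + 1) * iteratedDeriv i r t = 0 := by
      intro t
      simp only [hr, iterDeriv_re_exp]
      have key : ((z ^ (m - 1) + ∑ i ∈ Finset.range (m - 1), (a (i + 1) : ℂ) * z ^ i)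
          * Complex.exp (z * t)) = 0 := by rw [hz1, zero_mul]
      calc (z ^ (m - 1) * Complex.exp (z * t)).re
            + ∑ i ∈ Finset.range (m - 1), a (i + 1) * (z ^ i * Complex.exp (z * t)).re
          = ((z ^ (m - 1) + ∑ i ∈ Finset.range (m - 1), (a (i + 1) : ℂ) * z ^ i)
              * Complex.exp (z * t)).re := by
            simp [add_mul, Finset.sum_mul, Complex.re_sum, mul_assoc, Complex.re_ofReal_mul]
        _ = 0 := by rw [key, Complex.zero_re]
    have hre : ∀ t : ℝ, r t = Real.exp (z.re * t) * Real.cos (z.im * t) := by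
      intro t
      simp [hr, Complex.exp_re, Complex.mul_re, Complex.mul_im]
    refine ⟨fun _ => 0, 0, r, continuous_const, tendsto_const_nhds,
      hcd, fun t _ => hode t, ?_⟩
    rintro ⟨v, hv⟩
    have h0 : Tendsto r atTop (nhds (v ⟨0, by omega⟩)) := by
      have := ((continuous_apply (⟨0, by omega⟩ : Fin (m - 1))).tendsto v).comp hv
      simpa [Function.comp_def, iteratedDeriv_zero] using this
    by_cases him : z.im = 0
    · have hrepos : 0 < z.re := by
        rcases lt_or_eq_of_le hz2 with h | h
        · exact h
        · exact absurd (Complex.ext h.symm him) hz0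
      have ht : Tendsto r atTop atTop := by
        have h1 : Tendsto (fun t : ℝ => Real.exp (z.re * t)) atTop atTop :=
          Real.tendsto_exp_atTop.comp (Tendsto.const_mul_atTop hrepos tendsto_id)
        refine h1.congr (fun t => ?_)
        rw [hre t, him, zero_mul, Real.cos_zero, mul_one]
      exact not_tendsto_nhds_of_tendsto_atTop ht _ h0
    · have hspos : 0 < |z.im| := abs_pos.2 him
      have hπ : (0 : ℝ) < Real.pi := Real.pi_pos
      have hx0 : ∀ n : ℕ, 0 ≤ (n * (2 * Real.pi)) / |z.im| :=
        fun n => div_nonneg (by positivity) hspos.le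
      have hy0 : ∀ n : ℕ, 0 ≤ (n * (2 * Real.pi) + Real.pi) / |z.im| :=
        fun n => div_nonneg (by positivity) hspos.le
      have hbase : Tendsto (fun n : ℕ => (n : ℝ) * (2 * Real.pi)) atTop atTop :=
        Tendsto.atTop_mul_const (by positivity) tendsto_natCast_atTop_atTop
      have hxt : Tendsto (fun n : ℕ => (n * (2 * Real.pi)) / |z.im|) atTop atTop :=
        hbase.atTop_div_const hspos
      have hyt : Tendsto (fun n : ℕ => (n * (2 * Real.pi) + Real.pi) / |z.im|) atTop atTop :=
        (tendsto_atTop_add_const_right _ _ hbase).atTop_div_const hspos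
      have hrx : ∀ n : ℕ, 1 ≤ r ((n * (2 * Real.pi)) / |z.im|) := by
        intro n
        have habs : |z.im * ((n * (2 * Real.pi)) / |z.im|)| = n * (2 * Real.pi) := by
          rw [abs_mul, abs_of_nonneg (hx0 n)]
          field_simp
        rw [hre, ← Real.cos_abs, habs, Real.cos_nat_mul_two_pi, mul_one]
        exact Real.one_le_exp (mul_nonneg hz2 (hx0 n))
      have hry : ∀ n : ℕ, r ((n * (2 * Real.pi) + Real.pi) / |z.im|) ≤ -1 := by
        intro n
        have habs : |z.im * ((n * (2 * Real.pi) + Real.pi) / |z.im|)|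
            = n * (2 * Real.pi) + Real.pi := by
          rw [abs_mul, abs_of_nonneg (hy0 n)]
          field_simp
        rw [hre, ← Real.cos_abs, habs, Real.cos_nat_mul_two_pi_add_pi, mul_neg_one,
          neg_le_neg_iff]
        exact Real.one_le_exp (mul_nonneg hz2 (hy0 n))
      have h1 : 1 ≤ v ⟨0, by omega⟩ := ge_of_tendsto' (h0.comp hxt) hrx
      have h2 : v ⟨0, by omega⟩ ≤ -1 := le_of_tendsto' (h0.comp hyt) hry
      linarith
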